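/- Let A_n be a Poisson random variable with mean nλT, λ, T > 0. Then for K > λT, lim_{n→∞} (1/n)·log P(A_n ≥ nK) = -(K·log(K/(λT)) - K + λT), and for every α > 0 there exists K > λT such that 2α - K·log(K/(λT)) + K - λT < 0. -/

import Mathlib

open MeasureTheory Filter

lemma tsum_pow_div_factorial' (x : ℝ) :
    ∑' k : ℕ, x ^ k / (Nat.factorial k : ℝ) = Real.exp x := by
  rw [Real.exp_eq_exp_ℝ, NormedSpace.exp_eq_tsum_div]

lemma exp_one_le_pow (k : ℕ) (hk : 1 ≤ k) :
    Real.exp 1 ≤ (1 + 1 / (k : ℝ)) ^ (k + 1) := by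
  have hk0 : (0:ℝ) < k := by exact_mod_cast hk
  have hx : (0:ℝ) < 1 + 1 / k := by positivity
  have hlog : 1 / ((k:ℝ) + 1) ≤ Real.log (1 + 1 / k) := by
    have h := Real.log_le_sub_one_of_pos (x := (1 + 1/(k:ℝ))⁻¹) (by positivity)
    rw [Real.log_inv] at h
    have : (1 + 1/(k:ℝ))⁻¹ = k / (k + 1) := by
      field_simp
    rw [this] at h
    have h2 : 1 - (k:ℝ) / (k + 1) = 1 / (k + 1) := by
      field_simp
      ring
    linarith
  calc Real.exp 1 ≤ Real.exp (((k:ℝ) + 1) * Real.log (1 + 1/k)) := by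
        apply Real.exp_le_exp.mpr
        calc (1:ℝ) = ((k:ℝ)+1) * (1 / ((k:ℝ)+1)) := by field_simp
        _ ≤ ((k:ℝ)+1) * Real.log (1 + 1/k) := by
            apply mul_le_mul_of_nonneg_left hlog (by positivity)
    _ = (1 + 1 / (k : ℝ)) ^ (k + 1) := by
        rw [show ((k:ℝ)+1) = ((k+1:ℕ):ℝ) by push_cast; ring, ← Real.log_pow,
          Real.exp_log (by positivity)]

lemma factorial_le_aux : ∀ k : ℕ, 1 ≤ k →
    (Nat.factorial k : ℝ) ≤ Real.exp 1 * k * ((k : ℝ) / Real.exp 1) ^ k := by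
  intro k hk
  induction k with
  | zero => omega
  | succ k ih =>
    rcases Nat.lt_or_ge k 1 with h | h
    · interval_cases k
      norm_num [Nat.factorial]
    · have ih' := ih h
      have hk0 : (0:ℝ) < k := by exact_mod_cast h
      have he : (0:ℝ) < Real.exp 1 := Real.exp_pos 1
      have key : (k:ℝ) * ((k:ℝ)/Real.exp 1)^k ≤ (((k:ℝ)+1)/Real.exp 1)^(k+1) := by
        rw [div_pow, div_pow, ← mul_div_assoc]
        rw [div_le_div_iff₀ (by positivity) (by positivity)]
        have hexp := exp_one_le_pow k h
        calc (k:ℝ) * (k:ℝ)^k * Real.exp 1 ^ (k+1)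
              = (Real.exp 1) * ((k:ℝ)^(k+1) * Real.exp 1 ^ k) := by rw [pow_succ]; ring
          _ ≤ (1 + 1/(k:ℝ))^(k+1) * ((k:ℝ)^(k+1) * Real.exp 1 ^ k) := by
              apply mul_le_mul_of_nonneg_right hexp (by positivity)
          _ = ((k:ℝ) * (1 + 1/(k:ℝ)))^(k+1) * Real.exp 1 ^ k := by rw [mul_pow]; ring
          _ = ((k:ℝ)+1)^(k+1) * Real.exp 1 ^ k := by
              congr 2
              field_simp
      calc ((Nat.factorial (k+1) : ℝ)) = ((k:ℝ)+1) * Nat.factorial k := by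
            rw [Nat.factorial_succ]; push_cast; ring
        _ ≤ ((k:ℝ)+1) * (Real.exp 1 * k * ((k:ℝ)/Real.exp 1)^k) := by
            apply mul_le_mul_of_nonneg_left ih' (by positivity)
        _ = Real.exp 1 * ((k:ℝ)+1) * ((k:ℝ) * ((k:ℝ)/Real.exp 1)^k) := by ring
        _ ≤ Real.exp 1 * ((k:ℝ)+1) * ((((k:ℝ)+1)/Real.exp 1)^(k+1)) := by
            apply mul_le_mul_of_nonneg_left key (by positivity)
        _ = Real.exp 1 * ((k+1 : ℕ):ℝ) * (((k+1:ℕ):ℝ)/Real.exp 1)^(k+1) := by push_cast; ring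

/-- Large-deviation rate of the Poisson upper tail: for `A_n ~ Poisson(nλT)` and `K > λT`,
`(1/n) log P(A_n ≥ nK) → -(K log(K/(λT)) - K + λT)`; moreover for every `α > 0` there is
`K > λT` with `2α - K log(K/(λT)) + K - λT < 0`. -/
theorem poisson_tail_ldp_rate
    {Ω : Type*} [MeasurableSpace Ω] (μ : Measure Ω) [IsProbabilityMeasure μ]
    (lam T : ℝ) (hlam : 0 < lam) (hT : 0 < T)
    (A : ℕ → Ω → ℕ) (hmeas : ∀ n, Measurable (A n))
    (hPois : ∀ n k : ℕ,
      μ {ω | A n ω = k}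
        = ENNReal.ofReal (Real.exp (-((n : ℝ) * lam * T)) * ((n : ℝ) * lam * T) ^ k
            / Nat.factorial k)) :
    (∀ K : ℝ, lam * T < K →
      Tendsto
        (fun n : ℕ => (1 / (n : ℝ)) *
          Real.log ((μ {ω | (n : ℝ) * K ≤ (A n ω : ℝ)}).toReal))
        atTop
        (nhds (-(K * Real.log (K / (lam * T)) - K + lam * T)))) ∧
      ∀ α : ℝ, 0 < α → ∃ K : ℝ, lam * T < K ∧
        2 * α - K * Real.log (K / (lam * T)) + K - lam * T < 0 := by
  have hlt : 0 < lam * T := mul_pos hlam hT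
  constructor
  · intro K hK
    have hK0 : 0 < K := hlt.trans hK
    have hKdiv : 1 < K / (lam * T) := (one_lt_div hlt).mpr hK
    have hθpos : 0 < Real.log (K / (lam * T)) := Real.log_pos hKdiv
    -- key per-n bounds
    have key : ∀ n : ℕ, 1 ≤ n →
        0 < Real.exp (-((n : ℝ) * lam * T)) * ((n : ℝ) * lam * T) ^ (⌈(n : ℝ) * K⌉₊)
            / (Nat.factorial ⌈(n : ℝ) * K⌉₊ : ℝ) ∧
        Real.exp (-((n : ℝ) * lam * T)) * ((n : ℝ) * lam * T) ^ (⌈(n : ℝ) * K⌉₊)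
            / (Nat.factorial ⌈(n : ℝ) * K⌉₊ : ℝ)
          ≤ (μ {ω | (n : ℝ) * K ≤ (A n ω : ℝ)}).toReal ∧
        (μ {ω | (n : ℝ) * K ≤ (A n ω : ℝ)}).toReal
          ≤ Real.exp (-((n : ℝ) * (K * Real.log (K / (lam * T)) - K + lam * T))) := by
      intro n hn
      have hn0 : (0 : ℝ) < n := by exact_mod_cast hn
      have hm0 : 0 < (n : ℝ) * lam * T := mul_pos (mul_pos hn0 hlam) hT
      set m := (n : ℝ) * lam * T with hm
      set p : ℕ → ℝ := fun k => Real.exp (-m) * m ^ k / (Nat.factorial k : ℝ) with hp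
      set q : ℕ → ℝ := fun k => if (n : ℝ) * K ≤ (k : ℝ) then p k else 0 with hq
      have hp_pos : ∀ k, 0 < p k := fun k =>
        div_pos (mul_pos (Real.exp_pos _) (pow_pos hm0 k))
          (by exact_mod_cast k.factorial_pos)
      have hq_nonneg : ∀ k, 0 ≤ q k := fun k => by
        by_cases h : (n : ℝ) * K ≤ (k : ℝ) <;> simp [hq, h, (hp_pos k).le]
      have hq_le_p : ∀ k, q k ≤ p k := fun k => by
        by_cases h : (n : ℝ) * K ≤ (k : ℝ) <;> simp [hq, h, (hp_pos k).le]
      have hp_sum : Summable p := by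
        have := (Real.summable_pow_div_factorial m).mul_left (Real.exp (-m))
        apply this.congr
        intro k
        exact (mul_div_assoc _ _ _).symm
      have hq_sum : Summable q := hp_sum.of_nonneg_of_le hq_nonneg hq_le_p
      -- measure identity
      have hset : {ω | (n : ℝ) * K ≤ (A n ω : ℝ)}
          = ⋃ k : ℕ, (if (n : ℝ) * K ≤ (k : ℝ) then A n ⁻¹' {k} else ∅) := by
        ext ω
        simp only [Set.mem_setOf_eq, Set.mem_iUnion]
        constructor
        · intro h
          exact ⟨A n ω, by rw [if_pos h]; exact rfl⟩
        · rintro ⟨k, hk⟩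
          by_cases h : (n : ℝ) * K ≤ (k : ℝ)
          · rw [if_pos h] at hk
            have hA : A n ω = k := hk
            rw [hA]; exact h
          · rw [if_neg h] at hk; exact absurd hk (Set.notMem_empty ω)
      have hmeasE : ∀ k : ℕ,
          MeasurableSet (if (n : ℝ) * K ≤ (k : ℝ) then A n ⁻¹' {k} else ∅) := fun k => by
        split
        · exact hmeas n (measurableSet_singleton k)
        · exact MeasurableSet.empty
      have hdisj : Pairwise (Function.onFun Disjoint
          fun k : ℕ => if (n : ℝ) * K ≤ (k : ℝ) then A n ⁻¹' {k} else ∅) := by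
        intro i j hij
        unfold Function.onFun
        dsimp only
        split <;> split
        · refine Set.disjoint_left.mpr fun ω hi hj => ?_
          exact hij ((show A n ω = i from hi).symm.trans (show A n ω = j from hj))
        all_goals simp
      have hμ : μ {ω | (n : ℝ) * K ≤ (A n ω : ℝ)} = ENNReal.ofReal (∑' k, q k) := by
        rw [hset, measure_iUnion hdisj hmeasE,
          ENNReal.ofReal_tsum_of_nonneg hq_nonneg hq_sum]
        apply tsum_congr
        intro k
        by_cases h : (n : ℝ) * K ≤ (k : ℝ)
        · rw [if_pos h]
          have h2 := hPois n k
          rw [show A n ⁻¹' {k} = {ω | A n ω = k} from rfl, h2, hq]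
          simp only [if_pos h, hp, hm]
        · rw [if_neg h, hq]
          simp only [if_neg h, ENNReal.ofReal_zero, measure_empty]
      have htr : (μ {ω | (n : ℝ) * K ≤ (A n ω : ℝ)}).toReal = ∑' k, q k := by
        rw [hμ, ENNReal.toReal_ofReal (tsum_nonneg hq_nonneg)]
      refine ⟨hp_pos _, ?_, ?_⟩
      · rw [htr]
        have hqk : q ⌈(n : ℝ) * K⌉₊ = p ⌈(n : ℝ) * K⌉₊ := by
          rw [hq]; simp only [if_pos (Nat.le_ceil ((n : ℝ) * K))]
        calc Real.exp (-m) * m ^ (⌈(n : ℝ) * K⌉₊) / (Nat.factorial ⌈(n : ℝ) * K⌉₊ : ℝ)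
            = q ⌈(n : ℝ) * K⌉₊ := by rw [hqk, hp]
          _ ≤ ∑' k, q k := Summable.le_tsum hq_sum _ fun j _ => hq_nonneg j
      · rw [htr]
        set θ := Real.log (K / (lam * T)) with hθ
        set r : ℕ → ℝ := fun k =>
          (Real.exp (-(θ * ((n : ℝ) * K))) * Real.exp (-m))
            * ((m * Real.exp θ) ^ k / (Nat.factorial k : ℝ)) with hr
        have hq_le_r : ∀ k, q k ≤ r k := by
          intro k
          by_cases h : (n : ℝ) * K ≤ (k : ℝ)
          · rw [hq]
            simp only [if_pos h]
            have hrk : r k = Real.exp (θ * (k : ℝ) - θ * ((n : ℝ) * K)) * p k := by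
              rw [hr, hp]
              simp only
              rw [mul_pow, ← Real.exp_nat_mul,
                show θ * (k : ℝ) - θ * ((n : ℝ) * K)
                  = (k : ℝ) * θ + -(θ * ((n : ℝ) * K)) by ring, Real.exp_add]
              ring
            rw [hrk]
            have h1 : 1 ≤ Real.exp (θ * (k : ℝ) - θ * ((n : ℝ) * K)) := by
              apply Real.one_le_exp
              have : 0 ≤ θ * ((k : ℝ) - (n : ℝ) * K) :=
                mul_nonneg hθpos.le (by linarith)
              nlinarith
            nlinarith [hp_pos k]
          · rw [hq]
            simp only [if_neg h]
            positivity
        have hr_sum : Summable r :=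
          ((Real.summable_pow_div_factorial (m * Real.exp θ)).mul_left _)
        have htsum_r : ∑' k, r k
            = Real.exp (-((n : ℝ) * (K * θ - K + lam * T))) := by
          rw [hr, tsum_mul_left, tsum_pow_div_factorial', ← Real.exp_add, ← Real.exp_add]
          congr 1
          have hexpθ : Real.exp θ = K / (lam * T) := Real.exp_log (by positivity)
          rw [hexpθ, hm]
          field_simp
          ring
        calc ∑' k, q k ≤ ∑' k, r k := Summable.tsum_le_tsum hq_le_r hq_sum hr_sum
          _ = Real.exp (-((n : ℝ) * (K * θ - K + lam * T))) := htsum_r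
    -- upper bound on the log expression
    have hub : ∀ n : ℕ, 1 ≤ n →
        (1 / (n : ℝ)) * Real.log ((μ {ω | (n : ℝ) * K ≤ (A n ω : ℝ)}).toReal)
          ≤ -(K * Real.log (K / (lam * T)) - K + lam * T) := by
      intro n hn
      obtain ⟨hpos, hlow, hup⟩ := key n hn
      have hn0 : (0 : ℝ) < n := by exact_mod_cast hn
      have hPpos : 0 < (μ {ω | (n : ℝ) * K ≤ (A n ω : ℝ)}).toReal := hpos.trans_le hlow
      have hlog : Real.log ((μ {ω | (n : ℝ) * K ≤ (A n ω : ℝ)}).toReal)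
          ≤ -((n : ℝ) * (K * Real.log (K / (lam * T)) - K + lam * T)) := by
        have := (Real.log_le_log_iff hPpos (Real.exp_pos _)).mpr hup
        rwa [Real.log_exp] at this
      calc (1 / (n : ℝ)) * Real.log ((μ {ω | (n : ℝ) * K ≤ (A n ω : ℝ)}).toReal)
          ≤ (1 / (n : ℝ)) * -((n : ℝ) * (K * Real.log (K / (lam * T)) - K + lam * T)) :=
            mul_le_mul_of_nonneg_left hlog (by positivity)
        _ = -(K * Real.log (K / (lam * T)) - K + lam * T) := by
            field_simp
    -- lower bound via g
    set g : ℕ → ℝ := fun n =>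
      -(lam * T) + ((⌈(n : ℝ) * K⌉₊ : ℝ) / (n : ℝ))
          * (Real.log ((n : ℝ) * lam * T / (⌈(n : ℝ) * K⌉₊ : ℝ)) + 1)
        - (1 + Real.log (⌈(n : ℝ) * K⌉₊ : ℝ)) / (n : ℝ) with hg
    have hlb : ∀ n : ℕ, 1 ≤ n →
        g n ≤ (1 / (n : ℝ)) *
          Real.log ((μ {ω | (n : ℝ) * K ≤ (A n ω : ℝ)}).toReal) := by
      intro n hn
      obtain ⟨hppos, hlow, _⟩ := key n hn
      have hn0 : (0 : ℝ) < n := by exact_mod_cast hn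
      have hm0 : 0 < (n : ℝ) * lam * T := mul_pos (mul_pos hn0 hlam) hT
      have hk1 : 1 ≤ ⌈(n : ℝ) * K⌉₊ := Nat.ceil_pos.mpr (by positivity)
      have hkR : (1 : ℝ) ≤ (⌈(n : ℝ) * K⌉₊ : ℝ) := by exact_mod_cast hk1
      have hkpos : (0 : ℝ) < (⌈(n : ℝ) * K⌉₊ : ℝ) := by linarith
      have hlogp : Real.log (Real.exp (-((n : ℝ) * lam * T))
            * ((n : ℝ) * lam * T) ^ (⌈(n : ℝ) * K⌉₊)
            / (Nat.factorial ⌈(n : ℝ) * K⌉₊ : ℝ))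
          = -((n : ℝ) * lam * T) + (⌈(n : ℝ) * K⌉₊ : ℝ) * Real.log ((n : ℝ) * lam * T)
            - Real.log (Nat.factorial ⌈(n : ℝ) * K⌉₊ : ℝ) := by
        rw [Real.log_div (by positivity)
            (by exact_mod_cast (Nat.factorial_pos _).ne'),
          Real.log_mul (Real.exp_ne_zero _) (by positivity), Real.log_exp,
          Real.log_pow]
      have hfact : Real.log (Nat.factorial ⌈(n : ℝ) * K⌉₊ : ℝ)
          ≤ 1 + Real.log (⌈(n : ℝ) * K⌉₊ : ℝ)
            + (⌈(n : ℝ) * K⌉₊ : ℝ) * Real.log (⌈(n : ℝ) * K⌉₊ : ℝ)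
            - (⌈(n : ℝ) * K⌉₊ : ℝ) := by
        have hb := factorial_le_aux _ hk1
        have hlg := (Real.log_le_log_iff
          (by exact_mod_cast (Nat.factorial_pos _)) (by positivity)).mpr hb
        rw [Real.log_mul (by positivity) (by positivity),
          Real.log_mul (Real.exp_ne_zero 1) (by positivity), Real.log_exp,
          Real.log_pow, Real.log_div (by positivity) (Real.exp_ne_zero 1),
          Real.log_exp] at hlg
        nlinarith [hlg]
      have step1 : g n = (1 / (n : ℝ)) * (-((n : ℝ) * lam * T)
          + (⌈(n : ℝ) * K⌉₊ : ℝ) * Real.log ((n : ℝ) * lam * T)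
          - (1 + Real.log (⌈(n : ℝ) * K⌉₊ : ℝ)
            + (⌈(n : ℝ) * K⌉₊ : ℝ) * Real.log (⌈(n : ℝ) * K⌉₊ : ℝ)
            - (⌈(n : ℝ) * K⌉₊ : ℝ))) := by
        rw [hg]
        simp only
        rw [Real.log_div (ne_of_gt hm0) (ne_of_gt hkpos)]
        field_simp
        ring
      calc g n ≤ (1 / (n : ℝ)) * Real.log (Real.exp (-((n : ℝ) * lam * T))
            * ((n : ℝ) * lam * T) ^ (⌈(n : ℝ) * K⌉₊)
            / (Nat.factorial ⌈(n : ℝ) * K⌉₊ : ℝ)) := by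
            rw [step1, hlogp]
            apply mul_le_mul_of_nonneg_left _ (by positivity)
            linarith
        _ ≤ (1 / (n : ℝ)) *
            Real.log ((μ {ω | (n : ℝ) * K ≤ (A n ω : ℝ)}).toReal) := by
            apply mul_le_mul_of_nonneg_left _ (by positivity)
            exact (Real.log_le_log_iff hppos (hppos.trans_le hlow)).mpr hlow
    -- tendsto of g
    have hcK : Tendsto (fun n : ℕ => (⌈(n : ℝ) * K⌉₊ : ℝ) / (n : ℝ)) atTop (nhds K) := by
      apply tendsto_of_tendsto_of_tendsto_of_le_of_le' (tendsto_const_nhds (x := K))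
        (f := fun n : ℕ => (⌈(n : ℝ) * K⌉₊ : ℝ) / (n : ℝ))
        (h := fun n : ℕ => K + 1 / (n : ℝ))
      · have := (tendsto_const_nhds (x := K)).add tendsto_one_div_atTop_nhds_zero_nat
        simpa using this
      · filter_upwards [eventually_ge_atTop 1] with n hn
        have hn0 : (0 : ℝ) < n := by exact_mod_cast hn
        rw [le_div_iff₀ hn0]
        calc K * n = (n : ℝ) * K := by ring
          _ ≤ (⌈(n : ℝ) * K⌉₊ : ℝ) := Nat.le_ceil _
      · filter_upwards [eventually_ge_atTop 1] with n hn
        have hn0 : (0 : ℝ) < n := by exact_mod_cast hn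
        rw [div_le_iff₀ hn0]
        have h1 : (⌈(n : ℝ) * K⌉₊ : ℝ) < (n : ℝ) * K + 1 :=
          Nat.ceil_lt_add_one (by positivity)
        calc (⌈(n : ℝ) * K⌉₊ : ℝ) ≤ (n : ℝ) * K + 1 := h1.le
          _ ≤ (K + 1 / (n : ℝ)) * n := by
              rw [add_mul, one_div, inv_mul_cancel₀ (ne_of_gt hn0)]
              nlinarith
    have hdiv : Tendsto (fun n : ℕ => (n : ℝ) * lam * T / (⌈(n : ℝ) * K⌉₊ : ℝ))
        atTop (nhds (lam * T / K)) := by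
      have h := (tendsto_const_nhds (x := lam * T)).div hcK (ne_of_gt hK0)
      apply h.congr'
      filter_upwards [eventually_ge_atTop 1] with n hn
      have hn0 : (0 : ℝ) < n := by exact_mod_cast hn
      have hk1 : 1 ≤ ⌈(n : ℝ) * K⌉₊ := Nat.ceil_pos.mpr (by positivity)
      have hkpos : (0 : ℝ) < (⌈(n : ℝ) * K⌉₊ : ℝ) := by exact_mod_cast hk1
      show lam * T / ((⌈(n : ℝ) * K⌉₊ : ℝ) / (n : ℝ)) = (n : ℝ) * lam * T / (⌈(n : ℝ) * K⌉₊ : ℝ)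
      rw [div_div_eq_mul_div, div_eq_div_iff (ne_of_gt hkpos) (ne_of_gt hkpos)]
      ring
    have hlogdiv : Tendsto
        (fun n : ℕ => Real.log ((n : ℝ) * lam * T / (⌈(n : ℝ) * K⌉₊ : ℝ)))
        atTop (nhds (Real.log (lam * T / K))) :=
      hdiv.log (by positivity)
    have hlogn : Tendsto (fun n : ℕ => Real.log n / (n : ℝ)) atTop (nhds 0) := by
      have h1 := Real.isLittleO_log_id_atTop.tendsto_div_nhds_zero
      have h2 := h1.comp (tendsto_natCast_atTop_atTop (R := ℝ))
      exact h2
    have he : Tendsto (fun n : ℕ => (1 + Real.log (⌈(n : ℝ) * K⌉₊ : ℝ)) / (n : ℝ))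
        atTop (nhds 0) := by
      have hupT : Tendsto
          (fun n : ℕ => (1 + Real.log (K + 1)) * (1 / (n : ℝ)) + Real.log n / (n : ℝ))
          atTop (nhds 0) := by
        have := (tendsto_one_div_atTop_nhds_zero_nat.const_mul
          (1 + Real.log (K + 1))).add hlogn
        simpa using this
      apply tendsto_of_tendsto_of_tendsto_of_le_of_le'
        (tendsto_const_nhds (x := (0:ℝ))) hupT
      · filter_upwards [eventually_ge_atTop 1] with n hn
        have hn0 : (0 : ℝ) < n := by exact_mod_cast hn
        have hk1 : 1 ≤ ⌈(n : ℝ) * K⌉₊ := Nat.ceil_pos.mpr (by positivity)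
        have hkR : (1 : ℝ) ≤ (⌈(n : ℝ) * K⌉₊ : ℝ) := by exact_mod_cast hk1
        have : 0 ≤ Real.log (⌈(n : ℝ) * K⌉₊ : ℝ) := Real.log_nonneg hkR
        positivity
      · filter_upwards [eventually_ge_atTop 1] with n hn
        have hn0 : (0 : ℝ) < n := by exact_mod_cast hn
        have hn1 : (1 : ℝ) ≤ n := by exact_mod_cast hn
        have hk1 : 1 ≤ ⌈(n : ℝ) * K⌉₊ := Nat.ceil_pos.mpr (by positivity)
        have hkR : (1 : ℝ) ≤ (⌈(n : ℝ) * K⌉₊ : ℝ) := by exact_mod_cast hk1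
        have hle : (⌈(n : ℝ) * K⌉₊ : ℝ) ≤ (n : ℝ) * (K + 1) := by
          have h1 : (⌈(n : ℝ) * K⌉₊ : ℝ) < (n : ℝ) * K + 1 :=
            Nat.ceil_lt_add_one (by positivity)
          nlinarith
        have hlogle : Real.log (⌈(n : ℝ) * K⌉₊ : ℝ)
            ≤ Real.log (n : ℝ) + Real.log (K + 1) := by
          rw [← Real.log_mul (ne_of_gt hn0) (by positivity)]
          exact (Real.log_le_log_iff (by linarith) (by positivity)).mpr hle
        rw [div_le_iff₀ hn0]
        have hexp : ((1 + Real.log (K + 1)) * (1 / (n : ℝ)) + Real.log n / (n : ℝ)) * n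
            = 1 + Real.log (K + 1) + Real.log n := by
          field_simp
        rw [hexp]
        linarith
    have hgT : Tendsto g atTop
        (nhds (-(K * Real.log (K / (lam * T)) - K + lam * T))) := by
      have h1 : Tendsto g atTop
          (nhds (-(lam * T) + K * (Real.log (lam * T / K) + 1) - 0)) := by
        rw [hg]
        exact ((tendsto_const_nhds (x := -(lam * T))).add
          (hcK.mul (hlogdiv.add (tendsto_const_nhds (x := (1:ℝ)))))).sub he
      have h2 : -(lam * T) + K * (Real.log (lam * T / K) + 1) - 0
          = -(K * Real.log (K / (lam * T)) - K + lam * T) := by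
        rw [show lam * T / K = (K / (lam * T))⁻¹ by rw [inv_div], Real.log_inv]
        ring
      rwa [h2] at h1
    apply tendsto_of_tendsto_of_tendsto_of_le_of_le' hgT
      (tendsto_const_nhds (x := -(K * Real.log (K / (lam * T)) - K + lam * T)))
    · filter_upwards [eventually_ge_atTop 1] with n hn
      exact hlb n hn
    · filter_upwards [eventually_ge_atTop 1] with n hn
      exact hub n hn
  · intro α hα
    refine ⟨lam * T * Real.exp 2 + 2 * α + 1, ?_, ?_⟩
    · nlinarith [Real.add_one_le_exp (2 : ℝ)]
    · have hKpos : 0 < lam * T * Real.exp 2 + 2 * α + 1 := by positivity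
      have h2 : (2 : ℝ) ≤ Real.log ((lam * T * Real.exp 2 + 2 * α + 1) / (lam * T)) := by
        rw [Real.le_log_iff_exp_le (by positivity), le_div_iff₀ hlt]
        nlinarith [Real.exp_pos (2 : ℝ)]
      nlinarith [mul_le_mul_of_nonneg_left h2 hKpos.le, mul_pos hlt (Real.exp_pos 2)]
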